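/- Let Ω ⊆ ℝⁿ be an open bounded set and let u : Ω → ℝ be a bounded continuous function that is locally semiconcave in Ω. Let x ∈ Ω be a point at which u is (Fréchet) differentiable. Then for ε > 0 small enough the sup-convolution u^ε is differentiable at x, and lim_{ε→0⁺} ∇u^ε(x) = ∇u(x). -/

import Mathlib

open Set Metric Filter

/-- The sup-convolution `u^ε` of a function `u : Ω → ℝ`. -/
noncomputable def supConv {n : ℕ} (ε : ℝ) (Ω : Set (EuclideanSpace ℝ (Fin n)))
    (u : EuclideanSpace ℝ (Fin n) → ℝ) (x : EuclideanSpace ℝ (Fin n)) : ℝ :=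
  sSup ((fun y => u y - ‖x - y‖ ^ 2 / (2 * ε)) '' Ω)

/-- A function `u` is locally semiconcave on an open set `A` if for every compact `K ⊆ A`
there is a constant `C ≥ 0` such that the semiconcavity inequality holds on every
segment contained in `K`. -/
def LocallySemiconcaveOn {n : ℕ} (A : Set (EuclideanSpace ℝ (Fin n)))
    (u : EuclideanSpace ℝ (Fin n) → ℝ) : Prop :=
  ∀ K : Set (EuclideanSpace ℝ (Fin n)), K ⊆ A → IsCompact K →
    ∃ C : ℝ, 0 ≤ C ∧ ∀ x y : EuclideanSpace ℝ (Fin n), segment ℝ x y ⊆ K →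
      ∀ l : ℝ, l ∈ Set.Icc (0:ℝ) 1 →
        l * u x + (1 - l) * u y - C * (l * (1 - l)) / 2 * ‖x - y‖ ^ 2
          ≤ u (l • x + (1 - l) • y)

open InnerProductSpace RealInnerProductSpace

set_option maxHeartbeats 1000000

lemma quad_real {C ε s r d : ℝ} (hC : 0 ≤ C) (hε : 0 < ε) (ht : C * ε < 1)
    (hs : 0 ≤ s) (hr : 0 ≤ r) (hd : 0 ≤ d) (h1 : r - s ≤ d) :
    0 ≤ C / (1 - C * ε) * s ^ 2 + d ^ 2 / ε - C * r ^ 2 := by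
  have h1t : 0 < 1 - C * ε := by linarith
  have key : 0 ≤ C * ε * s ^ 2 + (1 - C * ε) * d ^ 2 - C * ε * (1 - C * ε) * r ^ 2 := by
    rcases le_total r s with hc | hc
    · nlinarith [mul_nonneg (mul_nonneg hC hε.le) (sub_nonneg.2 (mul_self_le_mul_self hr hc)),
        mul_nonneg (mul_nonneg (mul_nonneg hC hε.le) (mul_nonneg hC hε.le)) (mul_nonneg hr hr),
        mul_nonneg h1t.le (mul_nonneg hd hd)]
    · have h2 : (r - s) ^ 2 ≤ d ^ 2 := by nlinarith
      nlinarith [sq_nonneg ((1 - C * ε) * r - s), mul_nonneg h1t.le (sub_nonneg.2 h2)]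
  have heq : C / (1 - C * ε) * s ^ 2 + d ^ 2 / ε - C * r ^ 2
      = (C * ε * s ^ 2 + (1 - C * ε) * d ^ 2 - C * ε * (1 - C * ε) * r ^ 2) / (ε * (1 - C * ε)) := by
    field_simp
  rw [heq]
  exact div_nonneg key (by positivity)

lemma hasGradientAt_of_quad {n : ℕ} {f : EuclideanSpace ℝ (Fin n) → ℝ}
    {x p : EuclideanSpace ℝ (Fin n)} {K r : ℝ} (hr : 0 < r) (hK : 0 ≤ K)
    (hb : ∀ h : EuclideanSpace ℝ (Fin n), ‖h‖ ≤ r → |f (x + h) - f x - ⟪p, h⟫_ℝ| ≤ K * ‖h‖ ^ 2) :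
    HasGradientAt f p x := by
  rw [hasGradientAt_iff_hasFDerivAt, hasFDerivAt_iff_isLittleO_nhds_zero,
    Asymptotics.isLittleO_iff]
  intro c hc
  rw [Metric.eventually_nhds_iff]
  refine ⟨min r (c / (K + 1)), lt_min hr (by positivity), fun {h} hdist => ?_⟩
  have hh : ‖h‖ < min r (c / (K + 1)) := by simpa [dist_zero_right] using hdist
  have h1 : ‖h‖ ≤ r := ((lt_min_iff.1 hh).1).le
  have h2 : ‖h‖ ≤ c / (K + 1) := ((lt_min_iff.1 hh).2).le
  rw [le_div_iff₀ (by positivity : (0:ℝ) < K + 1)] at h2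
  have hb' := hb h h1
  have hd : (toDual ℝ (EuclideanSpace ℝ (Fin n)) p) h = ⟪p, h⟫_ℝ := by
    simp [InnerProductSpace.toDual_apply_apply]
  rw [Real.norm_eq_abs, hd]
  nlinarith [norm_nonneg h, abs_nonneg (f (x + h) - f x - ⟪p, h⟫_ℝ)]

theorem supConv_gradient_pointwise_convergence
    {n : ℕ} (Ω : Set (EuclideanSpace ℝ (Fin n)))
    (hΩopen : IsOpen Ω) (hΩbdd : Bornology.IsBounded Ω)
    (u : EuclideanSpace ℝ (Fin n) → ℝ)
    (hu : ContinuousOn u Ω) (hubdd : ∃ M : ℝ, ∀ y ∈ Ω, |u y| ≤ M)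
    (hsc : LocallySemiconcaveOn Ω u)
    (x : EuclideanSpace ℝ (Fin n)) (hx : x ∈ Ω)
    (hdiff : DifferentiableAt ℝ u x) :
    (∃ ε₀ > (0:ℝ), ∀ ε : ℝ, 0 < ε → ε < ε₀ →
        DifferentiableAt ℝ (supConv ε Ω u) x) ∧
    Tendsto (fun ε : ℝ => gradient (supConv ε Ω u) x)
      (nhdsWithin 0 (Set.Ioi 0)) (nhds (gradient u x)) := by
  classical
  obtain ⟨M₀, hM₀⟩ := hubdd
  set M' : ℝ := max M₀ 0 + 1 with hM'def
  have hM'1 : (1:ℝ) ≤ M' := by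
    have : (0:ℝ) ≤ max M₀ 0 := le_max_right _ _
    linarith
  have hM'pos : (0:ℝ) < M' := by linarith
  have hM' : ∀ y ∈ Ω, |u y| ≤ M' := fun y hy =>
    (hM₀ y hy).trans (by linarith [le_max_left M₀ (0:ℝ)])
  -- a closed ball around x inside Ω
  obtain ⟨r₀, hr₀pos, hr₀⟩ := Metric.isOpen_iff.1 hΩopen x hx
  set R : ℝ := r₀ / 2 with hRdef
  have hRpos : 0 < R := by positivity
  have hRΩ : closedBall x R ⊆ Ω :=
    (Metric.closedBall_subset_ball (by linarith)).trans hr₀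
  -- semiconcavity constant on closedBall x R
  obtain ⟨C, hC0, hCsc⟩ := hsc (closedBall x R) hRΩ (isCompact_closedBall x R)
  set ε₀ : ℝ := min (R ^ 2 / (64 * M')) (C + 1)⁻¹ with hε₀def
  have hε₀pos : 0 < ε₀ := lt_min (by positivity) (by positivity)
  -- upper bound for elements of the image set
  have himub : ∀ (z : EuclideanSpace ℝ (Fin n)) (ε : ℝ), 0 < ε →
      ∀ v ∈ (fun y => u y - ‖z - y‖ ^ 2 / (2 * ε)) '' Ω, v ≤ M' := by
    rintro z ε hε v ⟨y, hy, rfl⟩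
    have h1 := (abs_le.1 (hM' y hy)).2
    have h2 : 0 ≤ ‖z - y‖ ^ 2 / (2 * ε) := by positivity
    linarith
  have hbdd : ∀ (z : EuclideanSpace ℝ (Fin n)) (ε : ℝ), 0 < ε →
      BddAbove ((fun y => u y - ‖z - y‖ ^ 2 / (2 * ε)) '' Ω) := fun z ε hε =>
    ⟨M', fun v hv => himub z ε hε v hv⟩
  have hle : ∀ (z : EuclideanSpace ℝ (Fin n)) (ε : ℝ), 0 < ε →
      ∀ y ∈ Ω, u y - ‖z - y‖ ^ 2 / (2 * ε) ≤ supConv ε Ω u z := fun z ε hε y hy =>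
    le_csSup (hbdd z ε hε) ⟨y, hy, rfl⟩
  -- the key claim
  have key : ∀ ε : ℝ, 0 < ε → ε < ε₀ → ∃ y ∈ Ω,
      ‖y - x‖ ≤ 2 * Real.sqrt (M' * ε) ∧
      supConv ε Ω u x = u y - ‖x - y‖ ^ 2 / (2 * ε) ∧
      HasGradientAt (supConv ε Ω u) (ε⁻¹ • (y - x)) x := by
    intro ε hε hεlt
    have hεR : ε < R ^ 2 / (64 * M') := lt_of_lt_of_le hεlt (min_le_left _ _)
    have hεC : ε < (C + 1)⁻¹ := lt_of_lt_of_le hεlt (min_le_right _ _)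
    have hCp : (0:ℝ) < C + 1 := by linarith
    have hCε : C * ε < 1 := by
      have h2 : ε * (C + 1) < (C + 1)⁻¹ * (C + 1) := by
        exact mul_lt_mul_of_pos_right hεC hCp
      rw [inv_mul_cancel₀ hCp.ne'] at h2
      linarith
    have h1t : 0 < 1 - C * ε := by linarith
    set ρ : ℝ := 2 * Real.sqrt (M' * ε) with hρdef
    have hρpos : 0 < ρ := by
      have : 0 < Real.sqrt (M' * ε) := Real.sqrt_pos.2 (by positivity)
      positivity
    have hρsq : ρ ^ 2 = 4 * (M' * ε) := by
      rw [hρdef, mul_pow, Real.sq_sqrt (by positivity : (0:ℝ) ≤ M' * ε)]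
      ring
    have hρlt : ρ < R / 4 := by
      have h4 : ρ ^ 2 < (R / 4) ^ 2 := by
        rw [hρsq]
        rw [div_pow, lt_div_iff₀ (by norm_num : (0:ℝ) < (4:ℝ) ^ 2)]
        rw [lt_div_iff₀ (by positivity : (0:ℝ) < 64 * M')] at hεR
        linarith
      exact lt_of_pow_lt_pow_left₀ 2 (by positivity) h4
    -- existence of maximizers
    have hmax : ∀ z ∈ closedBall x (R / 4), ∃ y ∈ closedBall z ρ,
        supConv ε Ω u z = u y - ‖z - y‖ ^ 2 / (2 * ε) := by
      intro z hz
      have hzR : z ∈ closedBall x R := (Metric.closedBall_subset_closedBall (by linarith)) hz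
      have hzΩ : z ∈ Ω := hRΩ hzR
      have hsub : closedBall z ρ ⊆ closedBall x (R / 2) := by
        intro w hw
        rw [mem_closedBall] at *
        have := dist_triangle w z x
        linarith
      have hsubΩ : closedBall z ρ ⊆ Ω :=
        hsub.trans ((Metric.closedBall_subset_closedBall (by linarith)).trans hRΩ)
      have hcont : ContinuousOn (fun y => u y - ‖z - y‖ ^ 2 / (2 * ε)) (closedBall z ρ) := by
        apply ContinuousOn.sub (hu.mono hsubΩ)
        apply Continuous.continuousOn
        fun_prop
      obtain ⟨y, hyS, hymax⟩ := (isCompact_closedBall z ρ).exists_isMaxOn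
        ⟨z, mem_closedBall_self hρpos.le⟩ hcont
      refine ⟨y, hyS, le_antisymm ?_ (hle z ε hε y (hsubΩ hyS))⟩
      apply csSup_le ((Set.nonempty_of_mem hzΩ).image _)
      rintro v ⟨y', hy', rfl⟩
      by_cases hcase : y' ∈ closedBall z ρ
      · exact hymax hcase
      · have hd : ρ < dist y' z := by
          rw [mem_closedBall] at hcase
          linarith [lt_of_not_ge hcase]
        have hd2 : ρ ^ 2 ≤ ‖z - y'‖ ^ 2 := by
          have h5 : ρ ≤ ‖z - y'‖ := by
            rw [← dist_eq_norm, dist_comm]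
            exact hd.le
          exact pow_le_pow_left₀ hρpos.le h5 2
        have hub' := (abs_le.1 (hM' y' hy')).2
        have hlb' := (abs_le.1 (hM' z hzΩ)).1
        have hzself : u z - ‖z - z‖ ^ 2 / (2 * ε) ≤ u y - ‖z - y‖ ^ 2 / (2 * ε) :=
          hymax (mem_closedBall_self hρpos.le)
        have hzz : ‖z - z‖ ^ 2 / (2 * ε) = 0 := by simp
        have hρ2ε : ρ ^ 2 / (2 * ε) = 2 * M' := by
          rw [hρsq]
          field_simp
          ring
        have hmono : ρ ^ 2 / (2 * ε) ≤ ‖z - y'‖ ^ 2 / (2 * ε) := by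
          gcongr
        linarith
    obtain ⟨y₀, hy₀ball, hy₀eq⟩ := hmax x (mem_closedBall_self (by positivity))
    have hballΩ : ∀ z ∈ closedBall x (R / 4), closedBall z ρ ⊆ closedBall x (R / 2) := by
      intro z hz w hw
      rw [mem_closedBall] at *
      have := dist_triangle w z x
      linarith
    have hy₀half : y₀ ∈ closedBall x (R / 2) :=
      hballΩ x (mem_closedBall_self (by positivity)) hy₀ball
    have hhalfΩ : closedBall x (R / 2) ⊆ Ω :=
      (Metric.closedBall_subset_closedBall (by linarith)).trans hRΩ
    have hy₀Ω : y₀ ∈ Ω := hhalfΩ hy₀half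
    set p : EuclideanSpace ℝ (Fin n) := ε⁻¹ • (y₀ - x) with hpdef
    -- lower bound
    have hlow : ∀ h : EuclideanSpace ℝ (Fin n),
        supConv ε Ω u x + ⟪p, h⟫_ℝ - ‖h‖ ^ 2 / (2 * ε) ≤ supConv ε Ω u (x + h) := by
      intro h
      have h1 := hle (x + h) ε hε y₀ hy₀Ω
      have hpt : x + h - y₀ = (x - y₀) + h := by abel
      have hexp : ‖x + h - y₀‖ ^ 2 = ‖x - y₀‖ ^ 2 + 2 * ⟪x - y₀, h⟫_ℝ + ‖h‖ ^ 2 := by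
        rw [hpt]; exact norm_add_sq_real _ _
      have hip : ⟪p, h⟫_ℝ = ε⁻¹ * ⟪y₀ - x, h⟫_ℝ := real_inner_smul_left _ _ _
      have hneg : ⟪y₀ - x, h⟫_ℝ = -⟪x - y₀, h⟫_ℝ := by
        rw [← inner_neg_left, neg_sub]
      rw [hexp] at h1
      have hdivs : (‖x - y₀‖ ^ 2 + 2 * ⟪x - y₀, h⟫_ℝ + ‖h‖ ^ 2) / (2 * ε)
          = ‖x - y₀‖ ^ 2 / (2 * ε) + ε⁻¹ * ⟪x - y₀, h⟫_ℝ + ‖h‖ ^ 2 / (2 * ε) := by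
        field_simp
      rw [hdivs] at h1
      rw [hy₀eq, hip, hneg]
      linarith
    -- upper (semiconcavity) bound
    have hupp : ∀ h : EuclideanSpace ℝ (Fin n), ‖h‖ ≤ R / 4 →
        supConv ε Ω u (x + h) + supConv ε Ω u (x - h) - 2 * supConv ε Ω u x
          ≤ C / (1 - C * ε) * ‖h‖ ^ 2 := by
      intro h hh
      have h2ε : (0:ℝ) < 2 * ε := by positivity
      have hx1 : x + h ∈ closedBall x (R / 4) := by
        rw [mem_closedBall, dist_eq_norm]
        simpa using hh
      have hx2 : x - h ∈ closedBall x (R / 4) := by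
        rw [mem_closedBall, dist_eq_norm]
        have : x - h - x = -h := by abel
        rw [this, norm_neg]
        exact hh
      obtain ⟨y₁, hy₁S, he₁⟩ := hmax (x + h) hx1
      obtain ⟨y₂, hy₂S, he₂⟩ := hmax (x - h) hx2
      have hy₁half : y₁ ∈ closedBall x (R / 2) := hballΩ _ hx1 hy₁S
      have hy₂half : y₂ ∈ closedBall x (R / 2) := hballΩ _ hx2 hy₂S
      have hseg : segment ℝ y₁ y₂ ⊆ closedBall x R :=
        ((convex_closedBall x (R / 2)).segment_subset hy₁half hy₂half).trans
          (Metric.closedBall_subset_closedBall (by linarith))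
      have hsc2 := hCsc y₁ y₂ hseg (1/2) (by norm_num)
      set ym : EuclideanSpace ℝ (Fin n) := (1/2 : ℝ) • y₁ + (1 - 1/2 : ℝ) • y₂ with hymdef
      have hymseg : ym ∈ segment ℝ y₁ y₂ :=
        ⟨1/2, 1/2, by norm_num, by norm_num, by norm_num, by rw [hymdef]; norm_num⟩
      have hymΩ : ym ∈ Ω :=
        hhalfΩ ((convex_closedBall x (R / 2)).segment_subset hy₁half hy₂half hymseg)
      have h0 := hle x ε hε ym hymΩ
      have hnxm : ‖x - ym‖ ^ 2 = (‖x + h - y₁‖ ^ 2 + ‖x - h - y₂‖ ^ 2) / 2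
          - ‖(2:ℝ) • h - (y₁ - y₂)‖ ^ 2 / 4 := by
        have hab : (x + h - y₁) - (x - h - y₂) = (2:ℝ) • h - (y₁ - y₂) := by module
        have hpar := parallelogram_law_with_norm ℝ (x + h - y₁) (x - h - y₂)
        rw [hab] at hpar
        have hxm : x - ym = (1/2 : ℝ) • ((x + h - y₁) + (x - h - y₂)) := by
          rw [hymdef]; module
        rw [hxm, norm_smul, Real.norm_eq_abs]
        rw [show |(1:ℝ)/2| = 1/2 by norm_num]
        rw [mul_pow]
        rw [pow_two ‖(x + h - y₁) + (x - h - y₂)‖]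
        rw [pow_two ‖(2:ℝ) • h - (y₁ - y₂)‖, pow_two ‖x + h - y₁‖, pow_two ‖x - h - y₂‖]
        linarith [hpar]
      have h2h2 : ‖(2:ℝ) • h‖ ^ 2 = 4 * ‖h‖ ^ 2 := by
        rw [norm_smul, Real.norm_eq_abs, show |(2:ℝ)| = 2 by norm_num]
        ring
      have hquad := quad_real hC0 hε hCε (norm_nonneg ((2:ℝ) • h)) (norm_nonneg (y₁ - y₂))
        (norm_nonneg ((2:ℝ) • h - (y₁ - y₂))) (by
          have h6 := norm_sub_norm_le (y₁ - y₂) ((2:ℝ) • h)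
          rwa [norm_sub_rev (y₁ - y₂) ((2:ℝ) • h)] at h6)
      rw [h2h2] at hquad
      have hq2 : 0 ≤ 4 * (ε * (C / (1 - C * ε))) * ‖h‖ ^ 2 + ‖(2:ℝ) • h - (y₁ - y₂)‖ ^ 2
          - C * ε * ‖y₁ - y₂‖ ^ 2 := by
        have hDe : ε * (‖(2:ℝ) • h - (y₁ - y₂)‖ ^ 2 / ε) = ‖(2:ℝ) • h - (y₁ - y₂)‖ ^ 2 := by
          field_simp
        have h9 := mul_nonneg hε.le hquad
        rw [mul_sub, mul_add, hDe] at h9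
        linarith [h9]
      have e1 : 2 * ε * supConv ε Ω u (x + h) = 2 * ε * u y₁ - ‖x + h - y₁‖ ^ 2 := by
        rw [he₁]; field_simp
      have e2 : 2 * ε * supConv ε Ω u (x - h) = 2 * ε * u y₂ - ‖x - h - y₂‖ ^ 2 := by
        rw [he₂]; field_simp
      have eS := mul_le_mul_of_nonneg_left hsc2 h2ε.le
      have e0 := mul_le_mul_of_nonneg_left h0 h2ε.le
      have e0' : 2 * ε * (u ym - ‖x - ym‖ ^ 2 / (2 * ε)) = 2 * ε * u ym - ‖x - ym‖ ^ 2 := by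
        field_simp
      rw [e0'] at e0
      have hgoal2 : 2 * ε * (supConv ε Ω u (x + h) + supConv ε Ω u (x - h)
          - 2 * supConv ε Ω u x) ≤ 2 * ε * (C / (1 - C * ε) * ‖h‖ ^ 2) := by
        linarith [e1, e2, e0, eS, hq2, hnxm]
      exact le_of_mul_le_mul_left hgoal2 h2ε
    have hgrad : HasGradientAt (supConv ε Ω u) p x := by
      refine hasGradientAt_of_quad (K := C / (1 - C * ε) + 1 / (2 * ε)) (r := R / 4)
        (by positivity) (by positivity) ?_
      intro h hh
      have h1 := hlow h
      have h2 := hlow (-h)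
      have h3 := hupp h hh
      have hxh : x + -h = x - h := by abel
      rw [hxh] at h2
      rw [norm_neg] at h2
      rw [inner_neg_right] at h2
      have habs : |supConv ε Ω u (x + h) - supConv ε Ω u x - ⟪p, h⟫_ℝ|
          ≤ (C / (1 - C * ε) + 1 / (2 * ε)) * ‖h‖ ^ 2 := by
        rw [abs_le]
        constructor
        · have hq : (0:ℝ) ≤ C / (1 - C * ε) * ‖h‖ ^ 2 := by positivity
          have heq2 : ‖h‖ ^ 2 / (2 * ε) = 1 / (2 * ε) * ‖h‖ ^ 2 := by ring
          linarith [h1]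
        · have heq2 : ‖h‖ ^ 2 / (2 * ε) = 1 / (2 * ε) * ‖h‖ ^ 2 := by ring
          linarith [h2, h3]
      exact habs
    exact ⟨y₀, hy₀Ω, mem_closedBall_iff_norm.1 hy₀ball, hy₀eq, hgrad⟩
  refine ⟨⟨ε₀, hε₀pos, fun ε hε hε' => ?_⟩, ?_⟩
  · obtain ⟨y, _, _, _, hgrad⟩ := key ε hε hε'
    exact hgrad.differentiableAt
  · have hgradu : HasGradientAt u (gradient u x) x := hdiff.hasGradientAt
    set g : EuclideanSpace ℝ (Fin n) := gradient u x with hgdef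
    rw [Metric.tendsto_nhdsWithin_nhds]
    intro η hη
    have hlo : ∀ η' > (0:ℝ), ∃ δ' > (0:ℝ), ∀ w : EuclideanSpace ℝ (Fin n), ‖w‖ < δ' →
        |u (x + w) - u x - ⟪g, w⟫_ℝ| ≤ η' * ‖w‖ := by
      intro η' hη'
      have h1 := hasGradientAt_iff_hasFDerivAt.1 hgradu
      rw [hasFDerivAt_iff_isLittleO_nhds_zero] at h1
      have h2 := (Asymptotics.isLittleO_iff.1 h1) hη'
      rw [Metric.eventually_nhds_iff] at h2
      obtain ⟨δ', hδ'pos, hδ'⟩ := h2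
      refine ⟨δ', hδ'pos, fun w hw => ?_⟩
      have h3 := hδ' (show dist w 0 < δ' by rwa [dist_zero_right])
      simpa [InnerProductSpace.toDual_apply_apply, Real.norm_eq_abs] using h3
    set η' : ℝ := min (η ^ 2 / (16 * (‖g‖ + 1))) (η / 8) with hη'def
    have hη'pos : 0 < η' := lt_min (by positivity) (by positivity)
    obtain ⟨δ', hδ'pos, hδ'⟩ := hlo η' hη'pos
    set δ : ℝ := min ε₀ (min (δ' ^ 2 / (4 * M')) (min (δ' / (‖g‖ + 1)) (R / (‖g‖ + 1)))) with hδdef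
    have hδpos : 0 < δ :=
      lt_min hε₀pos (lt_min (by positivity) (lt_min (by positivity) (by positivity)))
    refine ⟨δ, hδpos, fun {ε} hεmem hεdist => ?_⟩
    have hε : 0 < ε := hεmem
    have hεδ : ε < δ := by
      rw [Real.dist_eq, sub_zero, abs_of_pos hε] at hεdist
      exact hεdist
    obtain ⟨y, hyΩ, hynear, heq, hgrad⟩ := key ε hε (lt_of_lt_of_le hεδ (min_le_left _ _))
    rw [hgrad.gradient]
    set p : EuclideanSpace ℝ (Fin n) := ε⁻¹ • (y - x) with hpdef
    set w : EuclideanSpace ℝ (Fin n) := y - x with hwdef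
    have hwp : w = ε • p := by
      rw [hpdef, smul_smul, mul_inv_cancel₀ hε.ne', one_smul]
    have hεM : ε < δ' ^ 2 / (4 * M') :=
      lt_of_lt_of_le hεδ ((min_le_right _ _).trans (min_le_left _ _))
    have hεg : ε < δ' / (‖g‖ + 1) :=
      lt_of_lt_of_le hεδ ((min_le_right _ _).trans ((min_le_right _ _).trans (min_le_left _ _)))
    have hεRg : ε < R / (‖g‖ + 1) :=
      lt_of_lt_of_le hεδ ((min_le_right _ _).trans ((min_le_right _ _).trans (min_le_right _ _)))
    rw [lt_div_iff₀ (by positivity : (0:ℝ) < ‖g‖ + 1)] at hεg hεRg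
    have hwδ : ‖w‖ < δ' := by
      have h5 : (2 * Real.sqrt (M' * ε)) ^ 2 = 4 * (M' * ε) := by
        rw [mul_pow, Real.sq_sqrt (by positivity : (0:ℝ) ≤ M' * ε)]
        ring
      have h6 : 4 * (M' * ε) < δ' ^ 2 := by
        rw [lt_div_iff₀ (by positivity : (0:ℝ) < 4 * M')] at hεM
        linarith
      have h7 : ‖w‖ ^ 2 < δ' ^ 2 := by
        have h8 : ‖w‖ ^ 2 ≤ (2 * Real.sqrt (M' * ε)) ^ 2 :=
          pow_le_pow_left₀ (norm_nonneg w) hynear 2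
        linarith [h8, h5, h6]
      exact lt_of_pow_lt_pow_left₀ 2 hδ'pos.le h7
    have hgΩ : x + ε • g ∈ Ω := by
      apply hRΩ
      rw [mem_closedBall, dist_eq_norm]
      have h7 : x + ε • g - x = ε • g := by module
      rw [h7, norm_smul, Real.norm_eq_abs, abs_of_pos hε]
      linarith [hεRg, hε]
    have hεgδ : ‖ε • g‖ < δ' := by
      rw [norm_smul, Real.norm_eq_abs, abs_of_pos hε]
      linarith [hεg, hε]
    have hF1 : u (x + ε • g) - ε * ‖g‖ ^ 2 / 2 ≤ supConv ε Ω u x := by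
      have h7 := hle x ε hε (x + ε • g) hgΩ
      have h8 : ‖x - (x + ε • g)‖ ^ 2 / (2 * ε) = ε * ‖g‖ ^ 2 / 2 := by
        have h9 : x - (x + ε • g) = -(ε • g) := by module
        rw [h9, norm_neg, norm_smul, Real.norm_eq_abs, abs_of_pos hε, mul_pow]
        field_simp
      rwa [h8] at h7
    have hF2' : |u (x + ε • g) - u x - ε * ‖g‖ ^ 2| ≤ η' * (ε * ‖g‖) := by
      have hF2 := hδ' (ε • g) hεgδ
      have h9 : ⟪g, ε • g⟫_ℝ = ε * ‖g‖ ^ 2 := by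
        rw [real_inner_smul_right, real_inner_self_eq_norm_sq]
      have h10 : ‖ε • g‖ = ε * ‖g‖ := by
        rw [norm_smul, Real.norm_eq_abs, abs_of_pos hε]
      rwa [h9, h10] at hF2
    have hxw : x + w = y := by rw [hwdef]; abel
    have hF3 : supConv ε Ω u x = u (x + w) - ε * ‖p‖ ^ 2 / 2 := by
      rw [hxw, heq]
      congr 1
      have h11 : ‖x - y‖ = ‖w‖ := by
        rw [show x - y = -w by rw [hwdef]; abel, norm_neg]
      rw [h11, hwp, norm_smul, Real.norm_eq_abs, abs_of_pos hε, mul_pow]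
      field_simp
    have hF4' : |u (x + w) - u x - ε * ⟪g, p⟫_ℝ| ≤ η' * (ε * ‖p‖) := by
      have hF4 := hδ' w hwδ
      have h12 : ⟪g, w⟫_ℝ = ε * ⟪g, p⟫_ℝ := by rw [hwp, real_inner_smul_right]
      have h13 : ‖w‖ = ε * ‖p‖ := by rw [hwp, norm_smul, Real.norm_eq_abs, abs_of_pos hε]
      rwa [h12, h13] at hF4
    have hcomb : ε * (‖g‖ ^ 2 / 2 - η' * ‖g‖) ≤ ε * (⟪g, p⟫_ℝ + η' * ‖p‖ - ‖p‖ ^ 2 / 2) := by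
      have a1 := (abs_le.1 hF2').1
      have a2 := (abs_le.1 hF4').2
      linarith [hF1, hF3, a1, a2]
    have hdivε : ‖g‖ ^ 2 / 2 - η' * ‖g‖ ≤ ⟪g, p⟫_ℝ + η' * ‖p‖ - ‖p‖ ^ 2 / 2 :=
      le_of_mul_le_mul_left hcomb hε
    have hnormsub : ‖g - p‖ ^ 2 = ‖g‖ ^ 2 - 2 * ⟪g, p⟫_ℝ + ‖p‖ ^ 2 := norm_sub_sq_real g p
    have hptri : ‖p‖ ≤ ‖g‖ + ‖g - p‖ := by
      calc ‖p‖ = ‖g - (g - p)‖ := by congr 1; abel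
        _ ≤ ‖g‖ + ‖g - p‖ := norm_sub_le g (g - p)
    have hkey2 : ‖g - p‖ ^ 2 ≤ 2 * η' * (2 * ‖g‖ + ‖g - p‖) := by
      linarith [hdivε, hnormsub, mul_le_mul_of_nonneg_left hptri hη'pos.le]
    have hfin : ‖g - p‖ < η := by
      by_contra hcon
      push_neg at hcon
      have hb1 : η' ≤ η ^ 2 / (16 * (‖g‖ + 1)) := min_le_left _ _
      have hb2 : η' ≤ η / 8 := min_le_right _ _
      have hgp : 0 < ‖g - p‖ := lt_of_lt_of_le hη hcon
      rw [le_div_iff₀ (by positivity : (0:ℝ) < 16 * (‖g‖ + 1))] at hb1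
      linarith [hkey2, norm_nonneg g, mul_le_mul_of_nonneg_right hcon hgp.le,
        mul_pos hη hη, mul_le_mul_of_nonneg_right hb2 hgp.le,
        mul_le_mul_of_nonneg_left hcon hη.le, mul_nonneg hη'pos.le (norm_nonneg g)]
    rw [dist_eq_norm, norm_sub_rev]
    exact hfin
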